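/- Let L = ⟨G, u⟩ ≅ M(G,2) and suppose G is not isomorphic to M(H,2) for any group H. Then every automorphism of the Moufang loop L preserves G setwise (and hence preserves the coset Gu). -/

import Mathlib

/-- The Chein loop `M(G,2) = G ⊎ Gu`, realized on `G ⊕ G` where `Sum.inl g = g`
and `Sum.inr g = g·u`, with multiplication extending that of `G` and satisfying
(c1) `g₁(g₂u) = (g₂g₁)u`, (c2) `(g₁u)g₂ = (g₁g₂⁻¹)u`, (c3) `(g₁u)(g₂u) = g₂⁻¹g₁`. -/
instance cheinMul (G : Type*) [Group G] : Mul (G ⊕ G) :=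
  ⟨fun x y =>
    match x, y with
    | .inl a, .inl b => .inl (a * b)
    | .inl a, .inr b => .inr (b * a)
    | .inr a, .inl b => .inr (a * b⁻¹)
    | .inr a, .inr b => .inl (b⁻¹ * a)⟩


instance cheinOne (G : Type*) [Group G] : One (G ⊕ G) := ⟨Sum.inl 1⟩


section aux
variable {G : Type} [Group G]

@[simp] lemma chein_inl_mul_inl (a b : G) :
    (Sum.inl a : G ⊕ G) * Sum.inl b = Sum.inl (a * b) := rfl
@[simp] lemma chein_inl_mul_inr (a b : G) :
    (Sum.inl a : G ⊕ G) * Sum.inr b = Sum.inr (b * a) := rfl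
@[simp] lemma chein_inr_mul_inl (a b : G) :
    (Sum.inr a : G ⊕ G) * Sum.inl b = Sum.inr (a * b⁻¹) := rfl
@[simp] lemma chein_inr_mul_inr (a b : G) :
    (Sum.inr a : G ⊕ G) * Sum.inr b = Sum.inl (b⁻¹ * a) := rfl

variable (f : (G ⊕ G) ≃* (G ⊕ G))

lemma f_inl_one : f (Sum.inl 1) = Sum.inl 1 := by
  have h : f (Sum.inl 1) * f (Sum.inl 1) = f (Sum.inl 1) := by
    rw [← map_mul, chein_inl_mul_inl, mul_one]
  rcases hx : f (Sum.inl (1 : G)) with x | x <;> rw [hx] at h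
  · simp only [chein_inl_mul_inl, Sum.inl.injEq] at h ⊢
    exact mul_left_cancel (h.trans (mul_one x).symm)
  · simp only [chein_inr_mul_inr] at h
    exact absurd h (by simp)

/-- The subgroup of elements of `G` hit by `f ∘ inl` inside `inl G`. -/
def Hsub : Subgroup G where
  carrier := {x | ∃ g, f (Sum.inl g) = Sum.inl x}
  mul_mem' := by
    rintro x y ⟨g₁, h₁⟩ ⟨g₂, h₂⟩
    exact ⟨g₁ * g₂, by rw [← chein_inl_mul_inl, map_mul, h₁, h₂, chein_inl_mul_inl]⟩
  one_mem' := ⟨1, f_inl_one f⟩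
  inv_mem' := by
    rintro x ⟨g, hg⟩
    have h : f (Sum.inl g⁻¹) * Sum.inl x = Sum.inl 1 := by
      rw [← hg, ← map_mul, chein_inl_mul_inl, inv_mul_cancel, f_inl_one]
    rcases hy : f (Sum.inl g⁻¹) with y | y <;> rw [hy] at h
    · simp only [chein_inl_mul_inl, Sum.inl.injEq] at h
      exact ⟨g⁻¹, by rw [hy, eq_inv_of_mul_eq_one_left h]⟩
    · simp only [chein_inr_mul_inl] at h
      exact absurd h (by simp)

variable {g₀ a : G} (ha : f (Sum.inl g₀) = Sum.inr a)

/-- The map realizing `G ≅ M(H,2)` when `f` maps part of `G` into `Gu`. -/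
def Fmap (g : G) : ↥(Hsub f) ⊕ ↥(Hsub f) :=
  match hx : f (Sum.inl g) with
  | .inl x => .inl ⟨x, g, hx⟩
  | .inr x => .inr ⟨a⁻¹ * x, g * g₀, by
      rw [← chein_inl_mul_inl, map_mul, hx, ha, chein_inr_mul_inr]⟩

lemma Fmap_inl {g x : G} (hx : f (Sum.inl g) = Sum.inl x) :
    Fmap f ha g = Sum.inl ⟨x, g, hx⟩ := by
  unfold Fmap
  split
  · rename_i x' hx'
    rw [hx] at hx'
    simp only [Sum.inl.injEq, Subtype.mk.injEq]
    exact Subtype.ext (Sum.inl.inj hx').symm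
  · rename_i x' hx'
    rw [hx] at hx'
    exact absurd hx' (by simp)

lemma Fmap_inr {g x : G} (hx : f (Sum.inl g) = Sum.inr x) :
    Fmap f ha g = Sum.inr ⟨a⁻¹ * x, g * g₀, by
      rw [← chein_inl_mul_inl, map_mul, hx, ha, chein_inr_mul_inr]⟩ := by
  unfold Fmap
  split
  · rename_i x' hx'
    rw [hx] at hx'
    exact absurd hx' (by simp)
  · rename_i x' hx'
    rw [hx] at hx'
    simp only [Sum.inr.injEq, Subtype.mk.injEq]
    exact Subtype.ext (congrArg (a⁻¹ * ·) (Sum.inr.inj hx').symm)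

lemma Fmap_mul (g₁ g₂ : G) :
    Fmap f ha (g₁ * g₂) = Fmap f ha g₁ * Fmap f ha g₂ := by
  have hm : f (Sum.inl (g₁ * g₂)) = f (Sum.inl g₁) * f (Sum.inl g₂) := by
    rw [← map_mul, chein_inl_mul_inl]
  rcases h₁ : f (Sum.inl g₁) with x₁ | x₁ <;>
    rcases h₂ : f (Sum.inl g₂) with x₂ | x₂ <;>
      rw [h₁, h₂] at hm
  · rw [chein_inl_mul_inl] at hm
    rw [Fmap_inl f ha h₁, Fmap_inl f ha h₂, Fmap_inl f ha hm, chein_inl_mul_inl]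
    exact congrArg Sum.inl (Subtype.ext rfl)
  · rw [chein_inl_mul_inr] at hm
    rw [Fmap_inl f ha h₁, Fmap_inr f ha h₂, Fmap_inr f ha hm, chein_inl_mul_inr]
    refine congrArg Sum.inr (Subtype.ext ?_)
    push_cast
    group
  · rw [chein_inr_mul_inl] at hm
    rw [Fmap_inr f ha h₁, Fmap_inl f ha h₂, Fmap_inr f ha hm, chein_inr_mul_inl]
    refine congrArg Sum.inr (Subtype.ext ?_)
    push_cast
    group
  · rw [chein_inr_mul_inr] at hm
    rw [Fmap_inr f ha h₁, Fmap_inr f ha h₂, Fmap_inl f ha hm, chein_inr_mul_inr]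
    refine congrArg Sum.inl (Subtype.ext ?_)
    push_cast
    group

lemma Fmap_injective : Function.Injective (Fmap f ha) := by
  intro g₁ g₂ hF
  have key : f (Sum.inl g₁) = f (Sum.inl g₂) := by
    rcases h₁ : f (Sum.inl g₁) with x₁ | x₁ <;>
      rcases h₂ : f (Sum.inl g₂) with x₂ | x₂
    · rw [Fmap_inl f ha h₁, Fmap_inl f ha h₂] at hF
      simp only [Sum.inl.injEq, Subtype.mk.injEq] at hF
      rw [show x₁ = x₂ by simpa using congrArg Subtype.val hF]
    · rw [Fmap_inl f ha h₁, Fmap_inr f ha h₂] at hF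
      exact absurd hF (by simp)
    · rw [Fmap_inr f ha h₁, Fmap_inl f ha h₂] at hF
      exact absurd hF (by simp)
    · rw [Fmap_inr f ha h₁, Fmap_inr f ha h₂] at hF
      simp only [Sum.inr.injEq, Subtype.mk.injEq, mul_right_inj] at hF
      rw [show x₁ = x₂ by simpa using congrArg Subtype.val hF]
  exact Sum.inl.inj (f.injective key)

lemma Fmap_surjective : Function.Surjective (Fmap f ha) := by
  rintro (⟨x, g, hg⟩ | ⟨x, hxH⟩)
  · exact ⟨g, Fmap_inl f ha hg⟩
  · obtain ⟨g', hg'⟩ := hxH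
    refine ⟨g' * g₀, ?_⟩
    have hgx : f (Sum.inl (g' * g₀)) = Sum.inr (a * x) := by
      rw [← chein_inl_mul_inl, map_mul, hg', ha, chein_inl_mul_inr]
    rw [Fmap_inr f ha hgx]
    exact congrArg Sum.inr (Subtype.ext (inv_mul_cancel_left a x))

end aux

/-- Lemma 3.3: let `L = ⟨G,u⟩ ≅ M(G,2)` (realized on `G ⊕ G`, with `Sum.inl G = G`
and `Sum.inr G = Gu`), and suppose `G` is not isomorphic to `M(H,2)` for any group
`H`. Then every automorphism of the loop `L` preserves `G` setwise, and hence also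
preserves the coset `Gu`. -/
theorem aut_preserves_G
    (G : Type) [Group G] [Finite G]
    (h : ∀ (H : Type) [Group H], IsEmpty (G ≃* (H ⊕ H)))
    (f : (G ⊕ G) ≃* (G ⊕ G)) :
    (∀ g : G, ∃ g' : G, f (Sum.inl g) = Sum.inl g') ∧
    (∀ g : G, ∃ g' : G, f (Sum.inr g) = Sum.inr g') := by
  by_cases hc : ∀ g : G, ∃ g' : G, f (Sum.inl g) = Sum.inl g'
  · refine ⟨hc, fun g => ?_⟩
    rcases hx : f (Sum.inr g) with x | x
    · exfalso
      set φ : G → G := fun g => (hc g).choose with hφ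
      have hspec : ∀ g, f (Sum.inl g) = Sum.inl (φ g) := fun g => (hc g).choose_spec
      have hinj : Function.Injective φ := by
        intro g₁ g₂ hgg
        apply Sum.inl_injective (f.injective ?_)
        rw [hspec, hspec, hgg]
      obtain ⟨g₁, hg₁⟩ := (Finite.injective_iff_surjective.mp hinj) x
      have : f (Sum.inl g₁) = f (Sum.inr g) := by rw [hspec, hg₁, hx]
      exact absurd (f.injective this) (by simp)
    · exact ⟨x, rfl⟩
  · exfalso
    push_neg at hc
    obtain ⟨g₀, hg₀⟩ := hc
    rcases ha : f (Sum.inl g₀) with a | a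
    · exact hg₀ a ha
    · have hbij : Function.Bijective (Fmap f ha) :=
        ⟨Fmap_injective f ha, Fmap_surjective f ha⟩
      exact (h ↥(Hsub f)).false
        { toEquiv := Equiv.ofBijective _ hbij
          map_mul' := Fmap_mul f ha }
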